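/- Let Q ⊆ ℝᵖ be compact convex, ρ : ℝᵖ → ℝ continuous and strongly convex on Q with parameter 1 (with respect to a norm ‖·‖_† on ℝᵖ), and A a p×q matrix. For τ > 0 define γ(z;τ) := max_{w∈Q} (⟨Az, w⟩ − τρ(w)), and let ŵ(z) be the unique maximizer. Then z ↦ γ(z;τ) is differentiable with gradient ∇γ(z;τ) = Aᵀŵ(z), and this gradient map is Lipschitz continuous with constant ‖A‖²_{#,†}/τ, where ‖A‖_{#,†} := max{⟨Au, v⟩ : ‖u‖_# = 1, ‖v‖_† = 1}. -/

import Mathlib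

open Matrix

set_option maxHeartbeats 1000000 in
/-- Nesterov smoothing: if `Q ⊆ ℝᵖ` is compact convex, `ρ` is continuous and
1-strongly convex on `Q` w.r.t. a norm `np` on `ℝᵖ`, `A` is a `p × q` matrix and `τ > 0`, then
`γ(z;τ) = max_{w ∈ Q} (⟨Az,w⟩ − τρ(w))` (attained at the unique maximizer `ŵ(z)`) is
differentiable with gradient `Aᵀ ŵ(z)`, and the gradient map is Lipschitz with constant
`‖A‖²_{#,†}/τ` (Lipschitz measured from the norm `nq` on `ℝ^q` to the dual norm of `nq`...
here: dual norm `dq` of `nq` on the gradient side, as in the paper). -/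
theorem stmt3 (p q : ℕ)
    -- a norm `np` on ℝᵖ and a norm `nq` on ℝ^q
    (np : (Fin p → ℝ) → ℝ)
    (hnp_add : ∀ x y, np (x + y) ≤ np x + np y)
    (hnp_smul : ∀ (c : ℝ) x, np (c • x) = |c| * np x)
    (hnp_eq : ∀ x, np x = 0 ↔ x = 0)
    (nq : (Fin q → ℝ) → ℝ)
    (hnq_add : ∀ x y, nq (x + y) ≤ nq x + nq y)
    (hnq_smul : ∀ (c : ℝ) x, nq (c • x) = |c| * nq x)
    (hnq_eq : ∀ x, nq x = 0 ↔ x = 0)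
    -- the dual norm of `nq`
    (dq : (Fin q → ℝ) → ℝ)
    (hdq : ∀ s, dq s = sSup ((fun u => ∑ i, s i * u i) '' {u | nq u = 1}))
    -- the set Q: compact and convex
    (Q : Set (Fin p → ℝ)) (hQne : Q.Nonempty) (hQcomp : IsCompact Q) (hQconv : Convex ℝ Q)
    -- the prox function: continuous, 1-strongly convex on Q w.r.t. `np`
    (ρ : (Fin p → ℝ) → ℝ) (hρcont : Continuous ρ)
    (hρsc : ∀ u₁ ∈ Q, ∀ u₂ ∈ Q, ∀ t : ℝ, 0 ≤ t → t ≤ 1 →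
      ρ (t • u₁ + (1 - t) • u₂) ≤ t * ρ u₁ + (1 - t) * ρ u₂
        - (1 / 2) * (t * (1 - t)) * (np (u₁ - u₂)) ^ 2)
    (A : Matrix (Fin p) (Fin q) ℝ) (τ : ℝ) (hτ : 0 < τ)
    -- the operator norm ‖A‖_{#,†}
    (MA : ℝ)
    (hMA : IsGreatest {x : ℝ | ∃ u v, nq u = 1 ∧ np v = 1 ∧ x = ∑ i, A.mulVec u i * v i} MA)
    -- ŵ(z): the unique maximizer over Q of w ↦ ⟨Az, w⟩ − τ ρ(w)
    (w : (Fin q → ℝ) → (Fin p → ℝ))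
    (hw : ∀ z, w z ∈ Q ∧ ∀ v ∈ Q, v ≠ w z →
      (∑ i, A.mulVec z i * v i) - τ * ρ v < (∑ i, A.mulVec z i * w z i) - τ * ρ (w z))
    -- γ(z;τ)
    (γ : (Fin q → ℝ) → ℝ)
    (hγ : ∀ z, γ z = (∑ i, A.mulVec z i * w z i) - τ * ρ (w z)) :
    (∀ z, DifferentiableAt ℝ γ z ∧
      ∀ h : Fin q → ℝ, fderiv ℝ γ z h = ∑ j, (Aᵀ.mulVec (w z)) j * h j) ∧
    (∀ z₁ z₂, dq (Aᵀ.mulVec (w z₁) - Aᵀ.mulVec (w z₂)) ≤ MA ^ 2 / τ * nq (z₁ - z₂)) := by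

  classical
  -- basic norm facts
  have hnp0 : np 0 = 0 := by simpa using hnp_smul 0 0
  have hnq0 : nq 0 = 0 := by simpa using hnq_smul 0 0
  have hnp_neg : ∀ x, np (-x) = np x := by
    intro x; simpa using hnp_smul (-1) x
  have hnq_neg : ∀ x, nq (-x) = nq x := by
    intro x; simpa using hnq_smul (-1) x
  have hnp_nonneg : ∀ x, 0 ≤ np x := by
    intro x
    have h := hnp_add x (-x)
    simp only [add_neg_cancel, hnp0, hnp_neg] at h
    linarith
  have hnq_nonneg : ∀ x, 0 ≤ nq x := by
    intro x
    have h := hnq_add x (-x)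
    simp only [add_neg_cancel, hnq0, hnq_neg] at h
    linarith
  -- MA is nonnegative
  obtain ⟨⟨u0, v0, hu0, hv0, hx0⟩, hub⟩ := hMA
  have hMA0 : 0 ≤ MA := by
    have hneg : -MA ∈ {x : ℝ | ∃ u v, nq u = 1 ∧ np v = 1 ∧ x = ∑ i, A.mulVec u i * v i} := by
      refine ⟨-u0, v0, by rw [hnq_neg]; exact hu0, hv0, ?_⟩
      rw [hx0]
      simp [Matrix.mulVec_neg, Finset.sum_neg_distrib]
    have := hub hneg
    linarith
  -- bilinear bound
  have bnd : ∀ (x : Fin q → ℝ) (y : Fin p → ℝ),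
      (∑ i, A.mulVec x i * y i) ≤ MA * (nq x * np y) := by
    intro x y
    rcases eq_or_ne x 0 with rfl | hx
    · simp [Matrix.mulVec_zero, hnq0]
    rcases eq_or_ne y 0 with rfl | hy
    · simp [hnp0]
    have hqx : 0 < nq x :=
      lt_of_le_of_ne (hnq_nonneg x) (fun h => hx ((hnq_eq x).1 h.symm))
    have hpy : 0 < np y :=
      lt_of_le_of_ne (hnp_nonneg y) (fun h => hy ((hnp_eq y).1 h.symm))
    have hmem : ((nq x)⁻¹ * (np y)⁻¹ * ∑ i, A.mulVec x i * y i) ∈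
        {x : ℝ | ∃ u v, nq u = 1 ∧ np v = 1 ∧ x = ∑ i, A.mulVec u i * v i} := by
      refine ⟨(nq x)⁻¹ • x, (np y)⁻¹ • y, ?_, ?_, ?_⟩
      · rw [hnq_smul, abs_of_pos (inv_pos.2 hqx)]
        field_simp
      · rw [hnp_smul, abs_of_pos (inv_pos.2 hpy)]
        field_simp
      · rw [Matrix.mulVec_smul, Finset.mul_sum]
        apply Finset.sum_congr rfl
        intro i _
        simp [smul_eq_mul]
        ring
    have hle := hub hmem
    have h2 : (nq x * np y) * ((nq x)⁻¹ * (np y)⁻¹ * ∑ i, A.mulVec x i * y i)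
        ≤ (nq x * np y) * MA :=
      mul_le_mul_of_nonneg_left hle (mul_pos hqx hpy).le
    have h3 : (nq x * np y) * ((nq x)⁻¹ * (np y)⁻¹ * ∑ i, A.mulVec x i * y i)
        = ∑ i, A.mulVec x i * y i := by
      field_simp
    rw [h3] at h2
    linarith
  -- the objective function
  set F : (Fin q → ℝ) → (Fin p → ℝ) → ℝ :=
    fun z v => (∑ i, A.mulVec z i * v i) - τ * ρ v with hFdef
  have hmax : ∀ z, ∀ v ∈ Q, F z v ≤ F z (w z) := by
    intro z v hv
    rcases eq_or_ne v (w z) with rfl | hne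
    · exact le_refl _
    · exact ((hw z).2 v hv hne).le
  -- strong concavity at the maximizer
  have opt : ∀ z, ∀ v ∈ Q, F z v + τ / 2 * (np (v - w z)) ^ 2 ≤ F z (w z) := by
    intro z v hv
    rcases eq_or_ne v (w z) with rfl | hne
    · simp [hnp0]
    set c : ℝ := τ / 2 * (np (v - w z)) ^ 2 with hcdef
    have hc : 0 ≤ c := by
      apply mul_nonneg (by linarith) (sq_nonneg _)
    have key : ∀ t : ℝ, 0 < t → t ≤ 1 → F z v + c ≤ F z (w z) + t * c := by
      intro t ht0 ht1
      have hmemQ : t • v + (1 - t) • (w z) ∈ Q :=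
        hQconv hv (hw z).1 ht0.le (by linarith) (by ring)
      have h1 := hρsc v hv (w z) (hw z).1 t ht0.le ht1
      have h2 := hmax z _ hmemQ
      have hlin : (∑ i, A.mulVec z i * (t • v + (1 - t) • (w z)) i)
          = t * (∑ i, A.mulVec z i * v i) + (1 - t) * (∑ i, A.mulVec z i * w z i) := by
        rw [Finset.mul_sum, Finset.mul_sum, ← Finset.sum_add_distrib]
        apply Finset.sum_congr rfl
        intro i _
        simp [smul_eq_mul]
        ring
      have hcomb : t * F z v + (1 - t) * F z (w z) + t * (1 - t) * c
          ≤ F z (t • v + (1 - t) • w z) := by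
        simp only [hFdef]
        rw [hlin, hcdef]
        nlinarith [mul_le_mul_of_nonneg_left h1 hτ.le]
      have hchain : t * F z v + (1 - t) * F z (w z) + t * (1 - t) * c ≤ F z (w z) :=
        le_trans hcomb h2
      have h4 : t * (F z v + (1 - t) * c) ≤ t * F z (w z) := by nlinarith [hchain]
      have h5 := le_of_mul_le_mul_left h4 ht0
      linarith
    refine le_of_forall_pos_le_add ?_
    intro ε hε
    have hcpos : (0 : ℝ) < c + 1 := by linarith
    set t : ℝ := min (1 / 2) (ε / (c + 1)) with htdef
    have ht0 : 0 < t := lt_min (by norm_num) (div_pos hε hcpos)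
    have ht1 : t ≤ 1 := le_trans (min_le_left _ _) (by norm_num)
    have hk := key t ht0 ht1
    have htc : t * c ≤ ε := by
      have h1 : t ≤ ε / (c + 1) := min_le_right _ _
      have h2 : t * c ≤ ε / (c + 1) * c := mul_le_mul_of_nonneg_right h1 hc
      have h3 : ε / (c + 1) * c ≤ ε := by
        rw [div_mul_eq_mul_div, div_le_iff₀ hcpos]
        nlinarith
      linarith
    linarith
  -- Lipschitz continuity of the maximizer
  have lipw : ∀ z₁ z₂, np (w z₁ - w z₂) ≤ MA / τ * nq (z₁ - z₂) := by
    intro z₁ z₂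
    have h1 := opt z₁ (w z₂) (hw z₂).1
    have h2 := opt z₂ (w z₁) (hw z₁).1
    have hsym : np (w z₂ - w z₁) = np (w z₁ - w z₂) := by
      rw [show w z₂ - w z₁ = -(w z₁ - w z₂) by abel, hnp_neg]
    rw [hsym] at h1
    have hb := bnd (z₁ - z₂) (w z₁ - w z₂)
    have hAd : (∑ i, A.mulVec (z₁ - z₂) i * (w z₁ - w z₂) i)
        = ((∑ i, A.mulVec z₁ i * w z₁ i) - (∑ i, A.mulVec z₁ i * w z₂ i))
          + ((∑ i, A.mulVec z₂ i * w z₂ i) - (∑ i, A.mulVec z₂ i * w z₁ i)) := by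
      rw [Matrix.mulVec_sub, ← Finset.sum_sub_distrib, ← Finset.sum_sub_distrib,
        ← Finset.sum_add_distrib]
      apply Finset.sum_congr rfl
      intro i _
      simp [Pi.sub_apply]
      ring
    simp only [hFdef] at h1 h2
    have hkey : τ * (np (w z₁ - w z₂)) ^ 2 ≤ MA * (nq (z₁ - z₂) * np (w z₁ - w z₂)) := by
      rw [hAd] at hb
      nlinarith [h1, h2]
    rcases eq_or_lt_of_le (hnp_nonneg (w z₁ - w z₂)) with heq | hlt
    · rw [← heq]
      exact mul_nonneg (div_nonneg hMA0 hτ.le) (hnq_nonneg _)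
    · rw [div_mul_eq_mul_div, le_div_iff₀ hτ]
      nlinarith [hkey, hlt]
  -- transpose identity
  have transp : ∀ (x : Fin q → ℝ) (y : Fin p → ℝ),
      (∑ i, A.mulVec x i * y i) = ∑ j, Aᵀ.mulVec y j * x j := by
    intro x y
    simp only [Matrix.mulVec, dotProduct, Matrix.transpose_apply,
      Finset.sum_mul]
    rw [Finset.sum_comm]
    apply Finset.sum_congr rfl
    intro j _
    apply Finset.sum_congr rfl
    intro i _
    ring
  -- norm comparison nq h ≤ C * ‖h‖
  have sum_le : ∀ (s : Finset (Fin q)) (f : Fin q → (Fin q → ℝ)),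
      nq (∑ j ∈ s, f j) ≤ ∑ j ∈ s, nq (f j) := by
    intro s f
    induction s using Finset.induction with
    | empty => simp [hnq0]
    | insert _ _ hnotmem ih =>
      rw [Finset.sum_insert hnotmem, Finset.sum_insert hnotmem]
      exact le_trans (hnq_add _ _) (by linarith)
  have he : ∀ j : Fin q, (Fin q → ℝ) := fun j => Pi.single j 1
  set e : Fin q → (Fin q → ℝ) := fun j => Pi.single j 1 with hedef
  set C : ℝ := ∑ j, nq (e j) with hCdef
  have hC0 : 0 ≤ C := Finset.sum_nonneg fun j _ => hnq_nonneg _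
  have hCbound : ∀ h : Fin q → ℝ, nq h ≤ C * ‖h‖ := by
    intro h
    have hrep : h = ∑ j, h j • e j := by
      funext i
      simp [hedef, Finset.sum_apply, Pi.single_apply]
    calc nq h = nq (∑ j, h j • e j) := by rw [← hrep]
      _ ≤ ∑ j, nq (h j • e j) := sum_le _ _
      _ = ∑ j, |h j| * nq (e j) := by
          apply Finset.sum_congr rfl; intro j _; rw [hnq_smul]
      _ ≤ ∑ j, ‖h‖ * nq (e j) := by
          apply Finset.sum_le_sum
          intro j _
          apply mul_le_mul_of_nonneg_right _ (hnq_nonneg _)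
          simpa [Real.norm_eq_abs] using norm_le_pi_norm h j
      _ = C * ‖h‖ := by rw [hCdef, Finset.sum_mul]; apply Finset.sum_congr rfl; intros; ring
  constructor
  · -- differentiability
    intro z
    have hlinmap : IsLinearMap ℝ (fun h : Fin q → ℝ => ∑ i, A.mulVec h i * w z i) := by
      constructor
      · intro x y
        rw [Matrix.mulVec_add, ← Finset.sum_add_distrib]
        apply Finset.sum_congr rfl
        intro i _
        simp [Pi.add_apply]
        ring
      · intro c x
        rw [Matrix.mulVec_smul, Finset.smul_sum]
        apply Finset.sum_congr rfl
        intro i _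
        simp [smul_eq_mul]
        ring
    set Llin : (Fin q → ℝ) →ₗ[ℝ] ℝ := IsLinearMap.mk' _ hlinmap with hLlindef
    set L : (Fin q → ℝ) →L[ℝ] ℝ := ⟨Llin, Llin.continuous_of_finiteDimensional⟩ with hLdef
    have hLapply : ∀ h : Fin q → ℝ, L h = ∑ i, A.mulVec h i * w z i := fun h => rfl
    have herr : ∀ h : Fin q → ℝ, ‖γ (z + h) - γ z - L h‖ ≤ MA ^ 2 / τ * C ^ 2 * ‖h‖ ^ 2 := by
      intro h
      have hγz : γ z = F z (w z) := hγ z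
      have hγzh : γ (z + h) = F (z + h) (w (z + h)) := hγ (z + h)
      have hsplit : ∀ v : Fin p → ℝ, F (z + h) v = F z v + ∑ i, A.mulVec h i * v i := by
        intro v
        simp only [hFdef]
        rw [Matrix.mulVec_add]
        rw [show (∑ i, (A.mulVec z + A.mulVec h) i * v i)
            = (∑ i, A.mulVec z i * v i) + ∑ i, A.mulVec h i * v i by
          rw [← Finset.sum_add_distrib]
          apply Finset.sum_congr rfl
          intro i _
          simp [Pi.add_apply]; ring]
        ring
      have hlow : 0 ≤ γ (z + h) - γ z - L h := by
        have h1 : F (z + h) (w z) ≤ F (z + h) (w (z + h)) := hmax (z + h) _ (hw z).1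
        rw [hsplit (w z)] at h1
        rw [hγz, hγzh, hLapply]
        linarith
      have hup : γ (z + h) - γ z - L h ≤ MA ^ 2 / τ * C ^ 2 * ‖h‖ ^ 2 := by
        have h1 : F z (w (z + h)) ≤ F z (w z) := hmax z _ (hw (z + h)).1
        have h2 := hsplit (w (z + h))
        have h3 : (∑ i, A.mulVec h i * w (z + h) i) - (∑ i, A.mulVec h i * w z i)
            = ∑ i, A.mulVec h i * (w (z + h) - w z) i := by
          rw [← Finset.sum_sub_distrib]
          apply Finset.sum_congr rfl
          intro i _
          simp [Pi.sub_apply]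
          ring
        have h4 := bnd h (w (z + h) - w z)
        have h5 : np (w (z + h) - w z) ≤ MA / τ * nq h := by
          have := lipw (z + h) z
          rwa [show z + h - z = h by abel] at this
        have h6 : nq h ≤ C * ‖h‖ := hCbound h
        have hnq_h : 0 ≤ nq h := hnq_nonneg h
        have h7 : (∑ i, A.mulVec h i * (w (z + h) - w z) i)
            ≤ MA ^ 2 / τ * C ^ 2 * ‖h‖ ^ 2 := by
          calc (∑ i, A.mulVec h i * (w (z + h) - w z) i)
              ≤ MA * (nq h * np (w (z + h) - w z)) := h4
            _ ≤ MA * (nq h * (MA / τ * nq h)) := by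
                apply mul_le_mul_of_nonneg_left _ hMA0
                exact mul_le_mul_of_nonneg_left h5 hnq_h
            _ = MA ^ 2 / τ * nq h ^ 2 := by ring
            _ ≤ MA ^ 2 / τ * (C * ‖h‖) ^ 2 := by
                apply mul_le_mul_of_nonneg_left _ (by positivity)
                exact pow_le_pow_left₀ hnq_h h6 2
            _ = MA ^ 2 / τ * C ^ 2 * ‖h‖ ^ 2 := by ring
        rw [hγz, hγzh, hLapply, h2]
        simp only [hFdef] at h1 ⊢
        linarith
      rw [Real.norm_eq_abs, abs_of_nonneg hlow]
      exact hup
    have hderiv : HasFDerivAt γ L z := by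
      rw [hasFDerivAt_iff_isLittleO_nhds_zero]
      rw [Asymptotics.isLittleO_iff]
      intro c hc
      set K : ℝ := MA ^ 2 / τ * C ^ 2 with hKdef
      have hK0 : 0 ≤ K := by positivity
      have hδ : (0 : ℝ) < c / (K + 1) := div_pos hc (by linarith)
      filter_upwards [Metric.ball_mem_nhds (0 : Fin q → ℝ) hδ] with h hh
      rw [Metric.mem_ball, dist_zero_right] at hh
      have := herr h
      have hb : K * ‖h‖ ^ 2 ≤ c * ‖h‖ := by
        have h1 : K * ‖h‖ ≤ K * (c / (K + 1)) :=
          mul_le_mul_of_nonneg_left hh.le hK0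
        have h2 : K * (c / (K + 1)) ≤ c := by
          rw [mul_comm, div_mul_eq_mul_div, div_le_iff₀ (by linarith : (0:ℝ) < K + 1)]
          nlinarith
        have h3 : K * ‖h‖ ^ 2 = (K * ‖h‖) * ‖h‖ := by ring
        rw [h3]
        exact mul_le_mul_of_nonneg_right (le_trans h1 h2) (norm_nonneg h)
      exact le_trans this hb
    refine ⟨hderiv.differentiableAt, ?_⟩
    intro h
    rw [hderiv.fderiv, hLapply, transp]
  · -- Lipschitz
    intro z₁ z₂
    rw [hdq]
    have hrhs : 0 ≤ MA ^ 2 / τ * nq (z₁ - z₂) := by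
      apply mul_nonneg (by positivity) (hnq_nonneg _)
    apply Real.sSup_le _ hrhs
    rintro x ⟨u, hu, rfl⟩
    have hu1 : nq u = 1 := hu
    show (∑ i, (Aᵀ.mulVec (w z₁) - Aᵀ.mulVec (w z₂)) i * u i) ≤ MA ^ 2 / τ * nq (z₁ - z₂)
    have hexp : (∑ i, (Aᵀ.mulVec (w z₁) - Aᵀ.mulVec (w z₂)) i * u i)
        = ∑ i, A.mulVec u i * (w z₁ - w z₂) i := by
      rw [show (∑ i, A.mulVec u i * (w z₁ - w z₂) i)
          = (∑ i, A.mulVec u i * w z₁ i) - ∑ i, A.mulVec u i * w z₂ i by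
        rw [← Finset.sum_sub_distrib]
        apply Finset.sum_congr rfl
        intro i _
        simp [Pi.sub_apply]; ring]
      rw [transp u (w z₁), transp u (w z₂), ← Finset.sum_sub_distrib]
      apply Finset.sum_congr rfl
      intro i _
      simp [Pi.sub_apply]
      ring
    rw [hexp]
    calc (∑ i, A.mulVec u i * (w z₁ - w z₂) i)
        ≤ MA * (nq u * np (w z₁ - w z₂)) := bnd u _
      _ = MA * np (w z₁ - w z₂) := by rw [hu1, one_mul]
      _ ≤ MA * (MA / τ * nq (z₁ - z₂)) :=
          mul_le_mul_of_nonneg_left (lipw z₁ z₂) hMA0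
      _ = MA ^ 2 / τ * nq (z₁ - z₂) := by ring
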